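/- Let Γ be a group of affine isometries of a nondegenerate symmetric bilinear form on ℝⁿ satisfying: each element has the form (I+A,v) with ⟨Ax,y⟩=-⟨x,Ay⟩, A²=0, and for any two elements A₁A₂A₃ = 0 for any three elements. Then the following are equivalent: (1) the linear parts of all elements of Γ pairwise commute; (2) for all (I+A₁,v₁),(I+A₂,v₂) ∈ Γ one has A₁A₂ = 0; (3) the subspace U_Γ = Σ_{γ∈Γ} im A is totally isotropic. -/

import Mathlib

/-- For a group `Γ` of affine isometries of a nondegenerate symmetric bilinear
form on `ℝⁿ`, all of the form `(I+A, v)` with `A` skew-symmetric, `A² = 0`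
and vanishing triple products, the following are equivalent:
(1) the linear parts pairwise commute (abelian linear holonomy);
(2) `A₁A₂ = 0` for any two elements;
(3) `U_Γ = Σ_{γ∈Γ} im A` is totally isotropic. -/
theorem stmt4 {n : ℕ}
    (B : LinearMap.BilinForm ℝ (Fin n → ℝ))
    (hsymm : ∀ x y, B x y = B y x)
    (hnd : B.Nondegenerate)
    (Γ : Subgroup ((Fin n → ℝ) ≃ᵃ[ℝ] (Fin n → ℝ)))
    (A : ((Fin n → ℝ) ≃ᵃ[ℝ] (Fin n → ℝ)) → ((Fin n → ℝ) →ₗ[ℝ] (Fin n → ℝ)))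
    (hA : ∀ γ, A γ = (γ.linear : (Fin n → ℝ) →ₗ[ℝ] (Fin n → ℝ)) - LinearMap.id)
    (hiso : ∀ γ ∈ Γ, ∀ x y, B (γ.linear x) (γ.linear y) = B x y)
    (hskew : ∀ γ ∈ Γ, ∀ x y, B (A γ x) y = - B x (A γ y))
    (hA2 : ∀ γ ∈ Γ, A γ ∘ₗ A γ = 0)
    (htriple : ∀ γ₁ ∈ Γ, ∀ γ₂ ∈ Γ, ∀ γ₃ ∈ Γ, A γ₁ ∘ₗ A γ₂ ∘ₗ A γ₃ = 0) :
    ((∀ γ₁ ∈ Γ, ∀ γ₂ ∈ Γ,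
        γ₁.linear.toLinearMap ∘ₗ γ₂.linear.toLinearMap
          = γ₂.linear.toLinearMap ∘ₗ γ₁.linear.toLinearMap)
      ↔ (∀ γ₁ ∈ Γ, ∀ γ₂ ∈ Γ, A γ₁ ∘ₗ A γ₂ = 0)) ∧
    ((∀ γ₁ ∈ Γ, ∀ γ₂ ∈ Γ, A γ₁ ∘ₗ A γ₂ = 0)
      ↔ (∀ u ∈ (⨆ γ ∈ Γ, LinearMap.range (A γ) : Submodule ℝ (Fin n → ℝ)),
          ∀ u' ∈ (⨆ γ ∈ Γ, LinearMap.range (A γ) : Submodule ℝ (Fin n → ℝ)),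
            B u u' = 0)) := by
  classical
  have hL : ∀ γ : (Fin n → ℝ) ≃ᵃ[ℝ] (Fin n → ℝ), ∀ x, γ.linear x = A γ x + x := by
    intro γ x
    rw [hA]
    simp
  -- the product formula
  have hmulA : ∀ γ₁ γ₂ : (Fin n → ℝ) ≃ᵃ[ℝ] (Fin n → ℝ),
      A (γ₁ * γ₂) = A γ₁ ∘ₗ A γ₂ + A γ₁ + A γ₂ := by
    intro γ₁ γ₂
    apply LinearMap.ext; intro x
    have h0 : (γ₁ * γ₂).linear x = γ₁.linear (γ₂.linear x) := rfl
    have h1 : A (γ₁ * γ₂) x = (γ₁ * γ₂).linear x - x := by rw [hA]; simp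
    simp only [LinearMap.add_apply, LinearMap.comp_apply]
    rw [h1, h0, hL γ₂ x, hL γ₁ (A γ₂ x + x)]
    simp only [map_add]
    abel
  -- anticommutation
  have hanti : ∀ γ₁ ∈ Γ, ∀ γ₂ ∈ Γ,
      A γ₁ ∘ₗ A γ₂ + A γ₂ ∘ₗ A γ₁ = 0 := by
    intro γ₁ h1 γ₂ h2
    have hm := hA2 (γ₁ * γ₂) (mul_mem h1 h2)
    rw [hmulA γ₁ γ₂] at hm
    have z1 : A γ₁ ∘ₗ A γ₁ = 0 := hA2 γ₁ h1
    have z2 : A γ₂ ∘ₗ A γ₂ = 0 := hA2 γ₂ h2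
    have t212 : A γ₂ ∘ₗ (A γ₁ ∘ₗ A γ₂) = 0 := htriple γ₂ h2 γ₁ h1 γ₂ h2
    have t121 : A γ₁ ∘ₗ (A γ₂ ∘ₗ A γ₁) = 0 := htriple γ₁ h1 γ₂ h2 γ₁ h1
    have expand : (A γ₁ ∘ₗ A γ₂ + A γ₁ + A γ₂) ∘ₗ (A γ₁ ∘ₗ A γ₂ + A γ₁ + A γ₂)
        = (A γ₁ ∘ₗ (A γ₂ ∘ₗ (A γ₁ ∘ₗ A γ₂))) + (A γ₁ ∘ₗ (A γ₂ ∘ₗ A γ₁))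
          + (A γ₁ ∘ₗ (A γ₂ ∘ₗ A γ₂)) + ((A γ₁ ∘ₗ A γ₁) ∘ₗ A γ₂)
          + (A γ₁ ∘ₗ A γ₁) + (A γ₂ ∘ₗ (A γ₁ ∘ₗ A γ₂)) + (A γ₂ ∘ₗ A γ₂)
          + (A γ₁ ∘ₗ A γ₂ + A γ₂ ∘ₗ A γ₁) := by
      simp only [LinearMap.add_comp, LinearMap.comp_add, LinearMap.comp_assoc]
      abel
    rw [expand, t212, t121, z1, z2] at hm
    simpa using hm
  refine ⟨⟨?_, ?_⟩, ⟨?_, ?_⟩⟩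
  · -- (1) → (2)
    intro h γ₁ h1 γ₂ h2
    have hc : A γ₁ ∘ₗ A γ₂ = A γ₂ ∘ₗ A γ₁ := by
      have hcomm := h γ₁ h1 γ₂ h2
      apply LinearMap.ext; intro x
      funext i
      have e0 := DFunLike.congr_fun hcomm x
      simp only [LinearMap.comp_apply, LinearEquiv.coe_coe] at e0
      rw [hL γ₂ x, hL γ₁ (A γ₂ x + x), hL γ₁ x, hL γ₂ (A γ₁ x + x)] at e0
      simp only [map_add] at e0
      have e1 := congrFun e0 i
      simp only [Pi.add_apply, LinearMap.comp_apply] at e1 ⊢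
      linarith
    have h0 := hanti γ₁ h1 γ₂ h2
    rw [← hc] at h0
    have h2' : (2 : ℝ) • (A γ₁ ∘ₗ A γ₂) = 0 := by
      rw [two_smul]; exact h0
    rcases smul_eq_zero.mp h2' with h' | h'
    · norm_num at h'
    · exact h'
  · -- (2) → (1)
    intro h γ₁ h1 γ₂ h2
    apply LinearMap.ext; intro x
    have e12 : A γ₁ (A γ₂ x) = 0 := by
      simpa using DFunLike.congr_fun (h γ₁ h1 γ₂ h2) x
    have e21 : A γ₂ (A γ₁ x) = 0 := by
      simpa using DFunLike.congr_fun (h γ₂ h2 γ₁ h1) x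
    simp only [LinearMap.comp_apply, LinearEquiv.coe_coe]
    rw [hL γ₂ x, hL γ₁ (A γ₂ x + x), hL γ₁ x, hL γ₂ (A γ₁ x + x)]
    simp only [map_add, e12, e21]
    abel
  · -- (2) → (3)
    intro h u hu u' hu'
    have key : ∀ γ ∈ Γ, ∀ v,
        ∀ w ∈ (⨆ γ ∈ Γ, LinearMap.range (A γ) : Submodule ℝ (Fin n → ℝ)),
        B (A γ v) w = 0 := by
      intro γ hγ v w hw
      have hle : (⨆ γ ∈ Γ, LinearMap.range (A γ) : Submodule ℝ (Fin n → ℝ))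
          ≤ LinearMap.ker (B (A γ v)) := by
        refine iSup_le fun γ' => iSup_le fun hγ' => ?_
        rintro _ ⟨z, rfl⟩
        simp only [LinearMap.mem_ker]
        rw [hskew γ hγ v (A γ' z)]
        have hz : A γ (A γ' z) = 0 := by
          simpa using DFunLike.congr_fun (h γ hγ γ' hγ') z
        rw [hz]
        simp
      exact hle hw
    have hle2 : (⨆ γ ∈ Γ, LinearMap.range (A γ) : Submodule ℝ (Fin n → ℝ))
        ≤ LinearMap.ker (B.flip u') := by
      refine iSup_le fun γ => iSup_le fun hγ => ?_
      rintro _ ⟨z, rfl⟩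
      simp only [LinearMap.mem_ker, LinearMap.flip_apply]
      exact key γ hγ z u' hu'
    simpa using hle2 hu
  · -- (3) → (2)
    intro h γ₁ h1 γ₂ h2
    apply LinearMap.ext; intro x
    have memS : ∀ γ ∈ Γ, ∀ v,
        A γ v ∈ (⨆ γ ∈ Γ, LinearMap.range (A γ) : Submodule ℝ (Fin n → ℝ)) := by
      intro γ hγ v
      exact Submodule.mem_iSup_of_mem γ
        (Submodule.mem_iSup_of_mem hγ (LinearMap.mem_range_self _ v))
    have hall : ∀ y, B (A γ₁ (A γ₂ x)) y = 0 := by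
      intro y
      rw [hskew γ₁ h1 (A γ₂ x) y, hsymm (A γ₂ x) (A γ₁ y),
        h _ (memS γ₁ h1 y) _ (memS γ₂ h2 x)]
      simp
    simpa using hnd.1 _ hall
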